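/- Let μ and ν be finite measures on a measurable space, let β ∈ (0,1) and c > 0, and suppose ν(A) ≤ c·(μ(A))^β for every measurable set A. Then ν is absolutely continuous with respect to μ, and the Radon–Nikodym derivative dν/dμ belongs to L^p(μ) for every real p with 1 ≤ p < 1/(1−β). -/

import Mathlib

open MeasureTheory Set ENNReal

/-- Let `μ` and `ν` be finite measures, `β ∈ (0,1)`, `c > 0`, and
suppose `ν(A) ≤ c·μ(A)^β` for every measurable set `A`. Then `ν ≪ μ` and the
Radon–Nikodym derivative `dν/dμ` belongs to `L^p(μ)` for every
`1 ≤ p < 1/(1−β)`. -/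
theorem stmt_7 {X : Type*} [MeasurableSpace X] (μ ν : Measure X)
    [IsFiniteMeasure μ] [IsFiniteMeasure ν]
    (β c : ℝ) (hβ0 : 0 < β) (hβ1 : β < 1) (hc : 0 < c)
    (h : ∀ A : Set X, MeasurableSet A → ν A ≤ ENNReal.ofReal c * μ A ^ β) :
    ν ≪ μ ∧ ∀ p : ℝ, 1 ≤ p → p < 1 / (1 - β) →
      MemLp (fun x => (ν.rnDeriv μ x).toReal) (ENNReal.ofReal p) μ := by
  have h1β : (0:ℝ) < 1 - β := by linarith
  have hac : ν ≪ μ := by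
    refine Measure.AbsolutelyContinuous.mk (fun s hs hs0 => ?_)
    have := h s hs
    rw [hs0, ENNReal.zero_rpow_of_pos hβ0, mul_zero] at this
    exact le_antisymm this zero_le
  refine ⟨hac, fun p hp1 hpl => ?_⟩
  set q : ℝ := (1 - β)⁻¹ with hq
  have hq1 : 1 ≤ q := by rw [hq]; rw [one_le_inv_iff₀]; exact ⟨h1β, by linarith⟩
  have hpq : p < q := by rwa [one_div] at hpl
  set f : X → ℝ := fun x => (ν.rnDeriv μ x).toReal with hf
  have f_mble : Measurable f := (Measure.measurable_rnDeriv ν μ).ennreal_toReal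
  have f_nn : ∀ x, 0 ≤ f x := fun x => ENNReal.toReal_nonneg
  have hp0 : (0:ℝ) < p := lt_of_lt_of_le one_pos hp1
  -- level set bound
  have level : ∀ t : ℝ, 0 < t →
      μ {a | t < f a} ≤ (ENNReal.ofReal c / ENNReal.ofReal t) ^ q := by
    intro t ht
    set A : Set X := {a | t < f a} with hA
    have hAm : MeasurableSet A := measurableSet_lt measurable_const f_mble
    have hlow : ENNReal.ofReal t * μ A ≤ ν A := by
      rw [← Measure.setLIntegral_rnDeriv hac A, ← setLIntegral_const A (ENNReal.ofReal t)]
      refine setLIntegral_mono (Measure.measurable_rnDeriv ν μ) (fun x hx => ?_)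
      calc ENNReal.ofReal t ≤ ENNReal.ofReal (f x) := ENNReal.ofReal_le_ofReal (le_of_lt hx)
        _ ≤ ν.rnDeriv μ x := ENNReal.ofReal_toReal_le
    have hup : ν A ≤ ENNReal.ofReal c * μ A ^ β := h A hAm
    set m := μ A with hm
    have hmtop : m ≠ ∞ := measure_ne_top μ A
    rcases eq_or_ne m 0 with hm0 | hm0
    · rw [hm0]; exact zero_le
    have hmβ0 : m ^ β ≠ 0 := by simp [ENNReal.rpow_eq_zero_iff, hm0, hmtop, hβ0.le, not_lt.2 hβ0.le, hβ0]
    have hmβtop : m ^ β ≠ ∞ := ENNReal.rpow_ne_top_of_nonneg hβ0.le hmtop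
    have key : ENNReal.ofReal t * m ^ (1 - β) ≤ ENNReal.ofReal c := by
      have hsplit : m = m ^ β * m ^ (1 - β) := by
        rw [← ENNReal.rpow_add β (1-β) hm0 hmtop]
        norm_num
      have : (ENNReal.ofReal t * m ^ (1 - β)) * m ^ β ≤ ENNReal.ofReal c * m ^ β := by
        have e : (ENNReal.ofReal t * m ^ (1 - β)) * m ^ β = ENNReal.ofReal t * m := by
          rw [mul_assoc, ← ENNReal.rpow_add _ _ hm0 hmtop]
          norm_num
        rw [e]
        exact le_trans hlow hup
      exact (ENNReal.mul_le_mul_iff_left hmβ0 hmβtop).mp this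
    have key2 : m ^ (1 - β) ≤ ENNReal.ofReal c / ENNReal.ofReal t := by
      rw [ENNReal.le_div_iff_mul_le (Or.inl (by simp [ht])) (Or.inl ENNReal.ofReal_ne_top)]
      rw [mul_comm]; exact key
    calc m = (m ^ (1 - β)) ^ q := by
            rw [← ENNReal.rpow_mul, mul_inv_cancel₀ h1β.ne', ENNReal.rpow_one]
      _ ≤ (ENNReal.ofReal c / ENNReal.ofReal t) ^ q :=
          ENNReal.rpow_le_rpow key2 (by positivity)
    -- end level
  -- finiteness of the layer cake integral
  have main : (∫⁻ ω, ENNReal.ofReal (f ω ^ p) ∂μ) < ∞ := by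
    rw [lintegral_rpow_eq_lintegral_meas_lt_mul μ (Filter.Eventually.of_forall f_nn)
      f_mble.aemeasurable hp0]
    refine ENNReal.mul_lt_top ENNReal.ofReal_lt_top ?_
    have hsplit : Ioi (0:ℝ) = Ioc 0 1 ∪ Ioi 1 := (Ioc_union_Ioi_eq_Ioi zero_le_one).symm
    rw [hsplit, lintegral_union measurableSet_Ioi Ioc_disjoint_Ioi_same]
    refine ENNReal.add_lt_top.mpr ⟨?_, ?_⟩
    · -- ∫ on (0,1]
      calc ∫⁻ t in Ioc (0:ℝ) 1, μ {a | t < f a} * ENNReal.ofReal (t ^ (p - 1))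
          ≤ ∫⁻ _ in Ioc (0:ℝ) 1, μ Set.univ := by
            refine setLIntegral_mono measurable_const (fun t ht => ?_)
            calc μ {a | t < f a} * ENNReal.ofReal (t ^ (p - 1))
                ≤ μ Set.univ * 1 := by
                  refine mul_le_mul' (measure_mono (subset_univ _)) ?_
                  rw [← ENNReal.ofReal_one]
                  exact ENNReal.ofReal_le_ofReal
                    (Real.rpow_le_one ht.1.le ht.2 (by linarith))
              _ = μ Set.univ := mul_one _
        _ < ∞ := by
            rw [setLIntegral_const]
            exact ENNReal.mul_lt_top (measure_lt_top μ _) (by simp)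
    · -- ∫ on (1,∞)
      have hs : p - 1 - q < -1 := by linarith
      have hint : IntegrableOn (fun t : ℝ => t ^ (p - 1 - q)) (Ioi 1) :=
        (integrableOn_Ioi_rpow_iff zero_lt_one).mpr hs
      calc ∫⁻ t in Ioi (1:ℝ), μ {a | t < f a} * ENNReal.ofReal (t ^ (p - 1))
          ≤ ∫⁻ t in Ioi (1:ℝ), ENNReal.ofReal (c ^ q) * ENNReal.ofReal (t ^ (p - 1 - q)) := by
            refine setLIntegral_mono (by measurability) (fun t ht => ?_)
            have ht1 : (1:ℝ) < t := ht
            have ht0 : (0:ℝ) < t := lt_trans one_pos ht1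
            calc μ {a | t < f a} * ENNReal.ofReal (t ^ (p - 1))
                ≤ (ENNReal.ofReal c / ENNReal.ofReal t) ^ q * ENNReal.ofReal (t ^ (p - 1)) :=
                  mul_le_mul_left (level t ht0) _
              _ = ENNReal.ofReal (c ^ q) * ENNReal.ofReal (t ^ (p - 1 - q)) := by
                  rw [← ENNReal.ofReal_div_of_pos ht0,
                    ENNReal.ofReal_rpow_of_pos (div_pos hc ht0),
                    ← ENNReal.ofReal_mul (Real.rpow_nonneg (div_nonneg hc.le ht0.le) q)]
                  rw [Real.div_rpow hc.le ht0.le, div_mul_eq_mul_div, mul_div_assoc,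
                    ← Real.rpow_sub ht0]
                  exact ENNReal.ofReal_mul (Real.rpow_nonneg hc.le q)
        _ = ENNReal.ofReal (c ^ q) * ∫⁻ t in Ioi (1:ℝ), ENNReal.ofReal (t ^ (p - 1 - q)) := by
            rw [lintegral_const_mul' _ _ ENNReal.ofReal_ne_top]
        _ < ∞ := ENNReal.mul_lt_top ENNReal.ofReal_lt_top hint.lintegral_lt_top
  -- conclude Memℒp
  have hpne0 : ENNReal.ofReal p ≠ 0 := by simp [hp0, ENNReal.ofReal_eq_zero, not_le]
  refine ⟨f_mble.aestronglyMeasurable, ?_⟩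
  rw [eLpNorm_lt_top_iff_lintegral_rpow_enorm_lt_top hpne0 ENNReal.ofReal_ne_top,
    ENNReal.toReal_ofReal hp0.le]
  have : ∀ x, ‖f x‖ₑ ^ p = ENNReal.ofReal (f x ^ p) := by
    intro x
    rw [Real.enorm_eq_ofReal (f_nn x), ENNReal.ofReal_rpow_of_nonneg (f_nn x) hp0.le]
  simpa only [this] using main
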